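/- Let σ be a cone in the smallest class of rational polyhedral cones closed under direct sum and containing all rational simplex cones, with dim(σ) = n > 1. If σ has exactly 2n − 2 extreme rays, then σ is a general bipyramidal cone. -/

import Mathlib

open scoped BigOperators

/-- The cone of nonnegative rational combinations of elements of `S`. -/
def posSpan {n : ℕ} (S : Set (Fin n → ℚ)) : Set (Fin n → ℚ) :=
  {x | ∃ (k : ℕ) (c : Fin k → ℚ) (b : Fin k → (Fin n → ℚ)),
    (∀ i, 0 ≤ c i) ∧ (∀ i, b i ∈ S) ∧ x = ∑ i, c i • b i}

/-- A rational polyhedral cone: `posSpan` of a finite set. -/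
def IsPolyCone {n : ℕ} (σ : Set (Fin n → ℚ)) : Prop :=
  ∃ B : Finset (Fin n → ℚ), σ = posSpan (B : Set (Fin n → ℚ))

/-- A cone is strongly convex if `σ ∩ (-σ) = {0}`. -/
def StronglyConvex {n : ℕ} (σ : Set (Fin n → ℚ)) : Prop :=
  ∀ x, x ∈ σ → -x ∈ σ → x = 0

/-- dot product in `ℚ^n`. -/
def dotQ {n : ℕ} (c x : Fin n → ℚ) : ℚ := ∑ i, c i * x i

/-- `R` is an extreme ray of `σ`: a one-dimensional face cut out by a
supporting vector `c`. -/
def IsExtremeRay {n : ℕ} (σ R : Set (Fin n → ℚ)) : Prop :=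
  ∃ c : Fin n → ℚ, (∀ x ∈ σ, 0 ≤ dotQ c x) ∧
    R = {x ∈ σ | dotQ c x = 0} ∧
    Module.finrank ℚ (Submodule.span ℚ R) = 1

/-- The dimension of a cone: dimension of its rational linear span. -/
noncomputable def coneDim {n : ℕ} (σ : Set (Fin n → ℚ)) : ℕ :=
  Module.finrank ℚ (Submodule.span ℚ σ)

/-- `σ` is the direct sum of `σ₁` and `σ₂` along `a`. -/
def IsDirectSumAlong {n : ℕ} (σ₁ σ₂ σ : Set (Fin n → ℚ)) (a : Fin n → ℚ) : Prop :=
  a ∈ σ₁ ∩ σ₂ ∧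
  Submodule.span ℚ σ₁ ⊓ Submodule.span ℚ σ₂ = Submodule.span ℚ {a} ∧
  σ = posSpan (σ₁ ∪ σ₂)

/-- `σ` is a direct sum of `σ₁` and `σ₂`. -/
def IsDirectSum {n : ℕ} (σ₁ σ₂ σ : Set (Fin n → ℚ)) : Prop :=
  ∃ a, IsDirectSumAlong σ₁ σ₂ σ a

/-- `a` lies on an extreme ray of `σ`. -/
def OnExtremeRay {n : ℕ} (σ : Set (Fin n → ℚ)) (a : Fin n → ℚ) : Prop :=
  ∃ R, IsExtremeRay σ R ∧ a ∈ R

/-- The ray `ℚ⁺ r`. -/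
def rayOf {n : ℕ} (r : Fin n → ℚ) : Set (Fin n → ℚ) :=
  {x | ∃ q : ℚ, 0 ≤ q ∧ x = q • r}

/-- General bipyramidal cones: the smallest class of cones containing all
2-simplex cones and closed under direct sum of internal type. -/
inductive GenBipyramidal {n : ℕ} : Set (Fin n → ℚ) → Prop
  | simplex2 (r₁ r₂ : Fin n → ℚ) (h : LinearIndependent ℚ ![r₁, r₂]) :
      GenBipyramidal (posSpan {r₁, r₂})
  | internal (σ₁ σ₂ : Set (Fin n → ℚ)) (a : Fin n → ℚ)
      (h₁ : GenBipyramidal σ₁) (h₂ : GenBipyramidal σ₂)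
      (hds : IsDirectSumAlong σ₁ σ₂ (posSpan (σ₁ ∪ σ₂)) a)
      (hint₁ : ¬ OnExtremeRay σ₁ a) (hint₂ : ¬ OnExtremeRay σ₂ a) :
      GenBipyramidal (posSpan (σ₁ ∪ σ₂))

/-- The smallest class of cones containing all rational simplex cones and
closed under direct sum (the class of complete intersection cones). -/
inductive CICone {n : ℕ} : Set (Fin n → ℚ) → Prop
  | simplex (s : ℕ) (r : Fin s → (Fin n → ℚ)) (h : LinearIndependent ℚ r) :
      CICone (posSpan (Set.range r))
  | dsum (σ₁ σ₂ : Set (Fin n → ℚ)) (h₁ : CICone σ₁) (h₂ : CICone σ₂)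
      (hds : IsDirectSum σ₁ σ₂ (posSpan (σ₁ ∪ σ₂))) :
      CICone (posSpan (σ₁ ∪ σ₂))


-- Auxiliary development

abbrev Q0 := {c : ℚ // 0 ≤ c}

variable {n : ℕ}

lemma subset_posSpan (S : Set (Fin n → ℚ)) : S ⊆ posSpan S := by
  intro x hx
  exact ⟨1, fun _ => 1, fun _ => x, fun i => zero_le_one, fun i => hx, by simp⟩

lemma zero_mem_posSpan (S : Set (Fin n → ℚ)) : 0 ∈ posSpan S :=
  ⟨0, fun i => 0, fun i => 0, fun i => le_rfl, fun i => i.elim0, by simp⟩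

lemma posSpan_add {S : Set (Fin n → ℚ)} {x y : Fin n → ℚ}
    (hx : x ∈ posSpan S) (hy : y ∈ posSpan S) : x + y ∈ posSpan S := by
  obtain ⟨k, c, b, hc, hb, rfl⟩ := hx
  obtain ⟨l, d, e, hd, he, rfl⟩ := hy
  refine ⟨k + l, Fin.append c d, Fin.append b e, ?_, ?_, ?_⟩
  · intro i
    refine Fin.addCases (fun j => ?_) (fun j => ?_) i
    · rw [Fin.append_left]; exact hc j
    · rw [Fin.append_right]; exact hd j
  · intro i
    refine Fin.addCases (fun j => ?_) (fun j => ?_) i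
    · rw [Fin.append_left]; exact hb j
    · rw [Fin.append_right]; exact he j
  · rw [Fin.sum_univ_add]
    congr 1
    · exact Finset.sum_congr rfl fun i _ => by rw [Fin.append_left, Fin.append_left]
    · exact Finset.sum_congr rfl fun i _ => by rw [Fin.append_right, Fin.append_right]

lemma posSpan_smul {S : Set (Fin n → ℚ)} {x : Fin n → ℚ} {q : ℚ}
    (hq : 0 ≤ q) (hx : x ∈ posSpan S) : q • x ∈ posSpan S := by
  obtain ⟨k, c, b, hc, hb, rfl⟩ := hx
  exact ⟨k, fun i => q * c i, b, fun i => mul_nonneg hq (hc i), hb, by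
    rw [Finset.smul_sum]; exact Finset.sum_congr rfl fun i _ => (mul_smul _ _ _).symm⟩

/-- `posSpan` is the span over nonnegative rationals. -/
lemma posSpan_eq_span (S : Set (Fin n → ℚ)) :
    posSpan S = (Submodule.span Q0 S : Set (Fin n → ℚ)) := by
  apply Set.Subset.antisymm
  · rintro x ⟨k, c, b, hc, hb, rfl⟩
    exact Submodule.sum_mem _ fun i _ =>
      Submodule.smul_mem _ (⟨c i, hc i⟩ : Q0) (Submodule.subset_span (hb i))
  · intro x hx
    induction hx using Submodule.span_induction with
    | mem x hx => exact subset_posSpan S hx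
    | zero => exact zero_mem_posSpan S
    | add x y _ _ hx hy => exact posSpan_add hx hy
    | smul q x _ hx => exact posSpan_smul q.2 hx

lemma mem_posSpan_iff {S : Set (Fin n → ℚ)} {x : Fin n → ℚ} :
    x ∈ posSpan S ↔ x ∈ Submodule.span Q0 S := by rw [posSpan_eq_span]; rfl

lemma posSpan_idem (S : Set (Fin n → ℚ)) : posSpan (posSpan S) = posSpan S := by
  rw [posSpan_eq_span S, posSpan_eq_span, Submodule.span_span]

lemma posSpan_mono {S T : Set (Fin n → ℚ)} (h : S ⊆ T) : posSpan S ⊆ posSpan T := by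
  rw [posSpan_eq_span, posSpan_eq_span]
  exact Submodule.span_mono h

lemma posSpan_union (S T : Set (Fin n → ℚ)) :
    posSpan (S ∪ T) = (Submodule.span Q0 S ⊔ Submodule.span Q0 T : Submodule Q0 (Fin n → ℚ)) := by
  rw [posSpan_eq_span, Submodule.span_union]

/-- Members of `posSpan (σ₁ ∪ σ₂)` decompose as sums when σᵢ are posSpans. -/
lemma mem_posSpan_union {S T : Set (Fin n → ℚ)} {x : Fin n → ℚ} :
    x ∈ posSpan (S ∪ T) ↔ ∃ y ∈ posSpan S, ∃ z ∈ posSpan T, y + z = x := by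
  rw [posSpan_union]
  constructor
  · intro hx
    obtain ⟨y, hy, z, hz, h⟩ := Submodule.mem_sup.mp hx
    exact ⟨y, mem_posSpan_iff.mpr hy, z, mem_posSpan_iff.mpr hz, h⟩
  · rintro ⟨y, hy, z, hz, rfl⟩
    exact Submodule.mem_sup.mpr ⟨y, mem_posSpan_iff.mp hy, z, mem_posSpan_iff.mp hz, rfl⟩

def dotL (c : Fin n → ℚ) : (Fin n → ℚ) →ₗ[ℚ] ℚ where
  toFun x := ∑ i, c i * x i
  map_add' x y := by
    simp [mul_add, Finset.sum_add_distrib]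
  map_smul' q x := by
    simp [Finset.mul_sum]
    exact Finset.sum_congr rfl fun i _ => by ring

lemma span_posSpan (S : Set (Fin n → ℚ)) :
    Submodule.span ℚ (posSpan S) = Submodule.span ℚ S := by
  apply le_antisymm
  · rw [Submodule.span_le]
    rintro x ⟨k, c, b, hc, hb, rfl⟩
    exact Submodule.sum_mem _ fun i _ =>
      Submodule.smul_mem _ _ (Submodule.subset_span (hb i))
  · exact Submodule.span_mono (subset_posSpan S)

lemma posSpan_self {σ : Set (Fin n → ℚ)} (h : IsPolyCone σ) : posSpan σ = σ := by
  obtain ⟨B, rfl⟩ := h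
  exact posSpan_idem _

lemma add_mem_of_poly {σ : Set (Fin n → ℚ)} (h : posSpan σ = σ) {x y : Fin n → ℚ}
    (hx : x ∈ σ) (hy : y ∈ σ) : x + y ∈ σ := by
  rw [← h] at hx hy ⊢; exact posSpan_add hx hy

lemma smul_mem_of_poly {σ : Set (Fin n → ℚ)} (h : posSpan σ = σ) {x : Fin n → ℚ} {q : ℚ}
    (hq : 0 ≤ q) (hx : x ∈ σ) : q • x ∈ σ := by
  rw [← h] at hx ⊢; exact posSpan_smul hq hx

lemma zero_mem_of_poly {σ : Set (Fin n → ℚ)} (h : posSpan σ = σ) : (0 : Fin n → ℚ) ∈ σ := by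
  rw [← h]; exact zero_mem_posSpan σ

lemma pointed_add_eq_zero {σ : Set (Fin n → ℚ)} (hcl : posSpan σ = σ)
    (hpt : StronglyConvex σ) {u v : Fin n → ℚ} (hu : u ∈ σ) (hv : v ∈ σ)
    (huv : u + v = 0) : u = 0 ∧ v = 0 := by
  have h1 : v = -u := eq_neg_of_add_eq_zero_right huv
  have hu0 : u = 0 := hpt u hu (by rw [← h1]; exact hv)
  exact ⟨hu0, by rw [h1, hu0, neg_zero]⟩


lemma dotQ_eq_dotL (c x : Fin n → ℚ) : dotQ c x = dotL c x := rfl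

lemma exposed_face_finset (B : Finset (Fin n → ℚ)) (c : Fin n → ℚ) :
    {x ∈ posSpan (B : Set (Fin n → ℚ)) | dotQ c x = 0} ∩ posSpan (B : Set (Fin n → ℚ)) =
    {x ∈ posSpan (B : Set (Fin n → ℚ)) | dotQ c x = 0} := Set.inter_eq_left.mpr (Set.sep_subset _ _)

lemma q0_smul_eq (q : Q0) (v : Fin n → ℚ) : q • v = (q : ℚ) • v := rfl

lemma mem_span_finset {R M : Type*} [Semiring R] [AddCommMonoid M] [Module R M]
    {s : Finset M} {x : M} :
    x ∈ Submodule.span R (s : Set M) ↔ ∃ f : M → R, ∑ i ∈ s, f i • i = x := by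
  constructor
  · intro h
    obtain ⟨f, -, hf⟩ := Submodule.mem_span_finset.mp h
    exact ⟨f, hf⟩
  · rintro ⟨f, rfl⟩
    exact Submodule.sum_mem _ fun i hi => Submodule.smul_mem _ _ (Submodule.subset_span hi)

/-- An exposed face of a finitely generated cone is the cone on the generators it kills. -/
lemma face_eq_posSpan_filter (B : Finset (Fin n → ℚ)) (c : Fin n → ℚ)
    (hc : ∀ x ∈ posSpan (B : Set (Fin n → ℚ)), 0 ≤ dotQ c x) :
    {x ∈ posSpan (B : Set (Fin n → ℚ)) | dotQ c x = 0} =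
      posSpan ((B.filter (fun b => dotQ c b = 0) : Finset (Fin n → ℚ)) : Set (Fin n → ℚ)) := by
  apply Set.Subset.antisymm
  · rintro x ⟨hxσ, hx0⟩
    rw [mem_posSpan_iff] at hxσ
    obtain ⟨f, hf⟩ := mem_span_finset.mp hxσ
    have hf' : ∑ b ∈ B, ((f b : ℚ)) • b = x := by rw [← hf]; rfl
    have hsum : ∑ b ∈ B, (f b : ℚ) * dotQ c b = 0 := by
      have h1 : dotQ c x = ∑ b ∈ B, (f b : ℚ) * dotQ c b := by
        rw [dotQ_eq_dotL, ← hf', map_sum]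
        exact Finset.sum_congr rfl fun b _ => by rw [map_smul]; rfl
      rw [← h1, hx0]
    have hnn : ∀ b ∈ B, 0 ≤ (f b : ℚ) * dotQ c b := fun b hb =>
      mul_nonneg (f b).2 (hc b (subset_posSpan _ hb))
    have hzero : ∀ b ∈ B, (f b : ℚ) * dotQ c b = 0 :=
      (Finset.sum_eq_zero_iff_of_nonneg hnn).mp hsum
    rw [mem_posSpan_iff]
    apply mem_span_finset.mpr
    refine ⟨f, ?_⟩
    rw [← hf]
    apply Finset.sum_subset (Finset.filter_subset _ _)
    intro b hb hnb
    have hne : dotQ c b ≠ 0 := fun h0 => hnb (Finset.mem_filter.mpr ⟨hb, h0⟩)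
    have hf0 : (f b : ℚ) = 0 := by
      rcases mul_eq_zero.mp (hzero b hb) with h | h
      · exact h
      · exact absurd h hne
    have : f b = 0 := Subtype.ext (by exact hf0)
    rw [this, zero_smul]
  · intro x hx
    have hxB : x ∈ posSpan (B : Set (Fin n → ℚ)) :=
      posSpan_mono (by exact_mod_cast Finset.coe_subset.mpr (Finset.filter_subset _ _)) hx
    refine ⟨hxB, ?_⟩
    rw [mem_posSpan_iff] at hx
    obtain ⟨f, hf⟩ := mem_span_finset.mp hx
    have hf' : ∑ b ∈ Finset.filter (fun b => dotQ c b = 0) B, ((f b : ℚ)) • b = x := by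
      rw [← hf]; rfl
    rw [dotQ_eq_dotL, ← hf', map_sum]
    apply Finset.sum_eq_zero
    intro b hb
    have hb0 : dotQ c b = 0 := (Finset.mem_filter.mp hb).2
    rw [map_smul]
    show (f b : ℚ) * dotL c b = 0
    rw [← dotQ_eq_dotL, hb0, mul_zero]

lemma posSpan_empty : posSpan (∅ : Set (Fin n → ℚ)) = {0} := by
  rw [posSpan_eq_span, Submodule.span_empty]
  rfl

lemma ray_structure {B : Finset (Fin n → ℚ)} {R : Set (Fin n → ℚ)}
    (hR : IsExtremeRay (posSpan (B : Set (Fin n → ℚ))) R) :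
    ∃ Z : Finset (Fin n → ℚ), Z ⊆ B ∧ R = posSpan (Z : Set (Fin n → ℚ)) := by
  obtain ⟨c, hc, hRe, _⟩ := hR
  exact ⟨B.filter (fun b => dotQ c b = 0), Finset.filter_subset _ _,
    hRe.trans (face_eq_posSpan_filter B c hc)⟩

lemma raySet_finite {σ : Set (Fin n → ℚ)} (h : IsPolyCone σ) :
    {R | IsExtremeRay σ R}.Finite := by
  obtain ⟨B, rfl⟩ := h
  apply Set.Finite.subset
    (Set.Finite.image (fun Z : Finset (Fin n → ℚ) => posSpan (Z : Set (Fin n → ℚ)))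
      B.powerset.finite_toSet)
  intro R hR
  obtain ⟨Z, hZB, rfl⟩ := ray_structure hR
  exact ⟨Z, by simpa using hZB, rfl⟩

lemma extremeRay_finrank {σ R : Set (Fin n → ℚ)} (h : IsExtremeRay σ R) :
    Module.finrank ℚ (Submodule.span ℚ R) = 1 := by
  obtain ⟨c, _, _, h1⟩ := h
  exact h1

lemma raySet_simplex_sub {s : ℕ} (r : Fin s → (Fin n → ℚ)) (h : LinearIndependent ℚ r) :
    {R | IsExtremeRay (posSpan (Set.range r)) R} ⊆
      (fun v => posSpan ({v} : Set (Fin n → ℚ))) '' Set.range r := by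
  intro R hR
  have hBcoe : ((Finset.image r Finset.univ : Finset (Fin n → ℚ)) : Set (Fin n → ℚ))
      = Set.range r := by
    rw [Finset.coe_image, Finset.coe_univ, Set.image_univ]
  rw [Set.mem_setOf_eq, ← hBcoe] at hR
  obtain ⟨Z, hZB, rfl⟩ := ray_structure hR
  have hrank : Module.finrank ℚ (Submodule.span ℚ (posSpan (Z : Set (Fin n → ℚ)))) = 1 :=
    extremeRay_finrank hR
  rw [span_posSpan] at hrank
  -- Z is nonempty
  obtain ⟨v, hvZ⟩ : Z.Nonempty := by
    by_contra hne
    rw [Finset.not_nonempty_iff_eq_empty] at hne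
    rw [hne, Finset.coe_empty, Submodule.span_empty, finrank_bot] at hrank
    exact zero_ne_one hrank
  obtain ⟨i, hi⟩ : ∃ i, r i = v := by
    have := hZB hvZ
    simpa using this
  have hv0 : v ≠ 0 := hi ▸ h.ne_zero i
  have hspan_eq : Submodule.span ℚ ({v} : Set (Fin n → ℚ))
      = Submodule.span ℚ (Z : Set (Fin n → ℚ)) := by
    apply Submodule.eq_of_le_of_finrank_eq
    · exact Submodule.span_mono (by simpa using hvZ)
    · rw [hrank, finrank_span_singleton hv0]
  have hZv : (Z : Set (Fin n → ℚ)) = {v} := by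
    apply Set.Subset.antisymm
    · intro w hwZ
      obtain ⟨j, hj⟩ : ∃ j, r j = w := by
        have := hZB hwZ; simpa using this
      by_cases hij : j = i
      · rw [Set.mem_singleton_iff, ← hj, hij, hi]
      · exfalso
        have hw_mem : w ∈ Submodule.span ℚ ({v} : Set (Fin n → ℚ)) := by
          rw [hspan_eq]
          exact Submodule.subset_span hwZ
        have : r j ∉ Submodule.span ℚ (r '' {i}) := h.notMem_span_image (by simpa using hij)
        rw [Set.image_singleton, hi, hj] at this
        exact this hw_mem
    · intro w hw
      rw [Set.mem_singleton_iff] at hw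
      subst hw
      exact hvZ
  exact ⟨v, ⟨i, hi⟩, by rw [hZv]⟩

lemma dotQ_add (c x y : Fin n → ℚ) : dotQ c (x + y) = dotQ c x + dotQ c y := by
  rw [dotQ_eq_dotL, dotQ_eq_dotL, dotQ_eq_dotL, map_add]

lemma dotQ_smul (c x : Fin n → ℚ) (q : ℚ) : dotQ c (q • x) = q * dotQ c x := by
  rw [dotQ_eq_dotL, dotQ_eq_dotL, map_smul]; rfl

lemma finrank_span_le_of_le {U V : Submodule ℚ (Fin n → ℚ)} (h : U ≤ V) :
    Module.finrank ℚ U ≤ Module.finrank ℚ V :=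
  Submodule.finrank_mono h

/-- The key decomposition of extreme rays of a direct sum. -/
lemma ray_decomp {σ₁ σ₂ : Set (Fin n → ℚ)} (hcl₁ : posSpan σ₁ = σ₁) (hcl₂ : posSpan σ₂ = σ₂)
    {a : Fin n → ℚ} (ha : a ∈ σ₁ ∩ σ₂)
    (hspan : Submodule.span ℚ σ₁ ⊓ Submodule.span ℚ σ₂ = Submodule.span ℚ {a})
    {R : Set (Fin n → ℚ)} (hR : IsExtremeRay (posSpan (σ₁ ∪ σ₂)) R) :
    (IsExtremeRay σ₁ R ∧ (a ∈ R → a = 0)) ∨ (IsExtremeRay σ₂ R ∧ (a ∈ R → a = 0)) ∨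
    (a ≠ 0 ∧ OnExtremeRay σ₁ a ∧ OnExtremeRay σ₂ a ∧
      R = {x ∈ posSpan (σ₁ ∪ σ₂) | ∃ q : ℚ, x = q • a}) := by
  obtain ⟨c, hc, hRe, hr1⟩ := hR
  have hsub₁ : σ₁ ⊆ posSpan (σ₁ ∪ σ₂) := (Set.subset_union_left).trans (subset_posSpan _)
  have hsub₂ : σ₂ ⊆ posSpan (σ₁ ∪ σ₂) := (Set.subset_union_right).trans (subset_posSpan _)
  set F₁ : Set (Fin n → ℚ) := {x ∈ σ₁ | dotQ c x = 0} with hF₁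
  set F₂ : Set (Fin n → ℚ) := {x ∈ σ₂ | dotQ c x = 0} with hF₂
  have hF₁R : F₁ ⊆ R := fun x hx => hRe ▸ ⟨hsub₁ hx.1, hx.2⟩
  have hF₂R : F₂ ⊆ R := fun x hx => hRe ▸ ⟨hsub₂ hx.1, hx.2⟩
  have hdecomp : ∀ x ∈ R, ∃ y ∈ F₁, ∃ z ∈ F₂, y + z = x := by
    intro x hx
    rw [hRe] at hx
    obtain ⟨hxσ, hx0⟩ := hx
    obtain ⟨y, hy, z, hz, hyz⟩ := mem_posSpan_union.mp hxσ
    rw [hcl₁] at hy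
    rw [hcl₂] at hz
    have h1 : 0 ≤ dotQ c y := hc y (hsub₁ hy)
    have h2 : 0 ≤ dotQ c z := hc z (hsub₂ hz)
    have h3 : dotQ c y + dotQ c z = 0 := by rw [← dotQ_add, hyz, hx0]
    exact ⟨y, ⟨hy, by linarith⟩, z, ⟨hz, by linarith⟩, hyz⟩
  have hRker : Submodule.span ℚ R ≤ LinearMap.ker (dotL c) := by
    rw [Submodule.span_le]
    intro x hx
    rw [hRe] at hx
    exact LinearMap.mem_ker.mpr ((dotQ_eq_dotL c x) ▸ hx.2)
  have hspanR : Submodule.span ℚ R = Submodule.span ℚ F₁ ⊔ Submodule.span ℚ F₂ := by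
    apply le_antisymm
    · rw [Submodule.span_le]
      intro x hx
      obtain ⟨y, hy, z, hz, hyz⟩ := hdecomp x hx
      exact Submodule.mem_sup.mpr ⟨y, Submodule.subset_span hy, z, Submodule.subset_span hz, hyz⟩
    · exact sup_le (Submodule.span_mono hF₁R) (Submodule.span_mono hF₂R)
  by_cases hb₁ : Submodule.span ℚ F₁ = ⊥
  · by_cases hb₂ : Submodule.span ℚ F₂ = ⊥
    · exfalso
      rw [hspanR, hb₁, hb₂, sup_bot_eq, finrank_bot] at hr1
      exact zero_ne_one hr1
    · -- F₁ trivial, R = F₂, extreme ray of σ₂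
      have hF₁0 : F₁ ⊆ {0} := fun x hx => by
        have := Submodule.subset_span (R := ℚ) hx
        rw [hb₁] at this
        simpa using this
      have hRF₂ : R = F₂ := by
        apply Set.Subset.antisymm
        · intro x hx
          obtain ⟨y, hy, z, hz, hyz⟩ := hdecomp x hx
          have : y = 0 := hF₁0 hy
          rw [← hyz, this, zero_add]
          exact hz
        · exact hF₂R
      refine Or.inr (Or.inl ⟨⟨c, fun x hx => hc x (hsub₂ hx), hRF₂ ▸ rfl, hRF₂ ▸ hr1⟩, ?_⟩)
      intro haR
      apply Set.eq_of_mem_singleton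
      apply hF₁0
      rw [hRF₂] at haR
      exact ⟨ha.1, haR.2⟩
  · by_cases hb₂ : Submodule.span ℚ F₂ = ⊥
    · -- symmetric: R = F₁
      have hF₂0 : F₂ ⊆ {0} := fun x hx => by
        have := Submodule.subset_span (R := ℚ) hx
        rw [hb₂] at this
        simpa using this
      have hRF₁ : R = F₁ := by
        apply Set.Subset.antisymm
        · intro x hx
          obtain ⟨y, hy, z, hz, hyz⟩ := hdecomp x hx
          have : z = 0 := hF₂0 hz
          rw [← hyz, this, add_zero]
          exact hy
        · exact hF₁R
      refine Or.inl ⟨⟨c, fun x hx => hc x (hsub₁ hx), hRF₁ ▸ rfl, hRF₁ ▸ hr1⟩, ?_⟩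
      intro haR
      apply Set.eq_of_mem_singleton
      apply hF₂0
      rw [hRF₁] at haR
      exact ⟨ha.2, haR.2⟩
    · -- both nontrivial: shared ray case
      have hle₁ : Submodule.span ℚ F₁ ≤ Submodule.span ℚ R := Submodule.span_mono hF₁R
      have hle₂ : Submodule.span ℚ F₂ ≤ Submodule.span ℚ R := Submodule.span_mono hF₂R
      have hrk₁ : Module.finrank ℚ (Submodule.span ℚ F₁) = 1 := by
        have hub := (finrank_span_le_of_le hle₁).trans_eq hr1
        have : Module.finrank ℚ (Submodule.span ℚ F₁) ≠ 0 :=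
          fun h0 => hb₁ (Submodule.finrank_eq_zero.mp h0)
        omega
      have hrk₂ : Module.finrank ℚ (Submodule.span ℚ F₂) = 1 := by
        have hub := (finrank_span_le_of_le hle₂).trans_eq hr1
        have : Module.finrank ℚ (Submodule.span ℚ F₂) ≠ 0 :=
          fun h0 => hb₂ (Submodule.finrank_eq_zero.mp h0)
        omega
      have heq₁ : Submodule.span ℚ F₁ = Submodule.span ℚ R :=
        Submodule.eq_of_le_of_finrank_eq hle₁ (by rw [hrk₁, hr1])
      have heq₂ : Submodule.span ℚ F₂ = Submodule.span ℚ R :=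
        Submodule.eq_of_le_of_finrank_eq hle₂ (by rw [hrk₂, hr1])
      have hRa : Submodule.span ℚ R ≤ Submodule.span ℚ ({a} : Set (Fin n → ℚ)) := by
        rw [← hspan]
        refine le_inf ?_ ?_
        · rw [← heq₁]
          exact Submodule.span_mono (fun x hx => hx.1)
        · rw [← heq₂]
          exact Submodule.span_mono (fun x hx => hx.1)
      have ha0 : a ≠ 0 := by
        intro h0
        rw [h0, Set.singleton_zero, Submodule.span_zero] at hRa
        have : Submodule.span ℚ R = ⊥ := le_bot_iff.mp hRa
        rw [this, finrank_bot] at hr1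
        exact zero_ne_one hr1
      have hspanA : Submodule.span ℚ R = Submodule.span ℚ ({a} : Set (Fin n → ℚ)) :=
        Submodule.eq_of_le_of_finrank_eq hRa (by rw [hr1, finrank_span_singleton ha0])
      have hdota : dotQ c a = 0 := by
        have haR : a ∈ Submodule.span ℚ R := by
          rw [hspanA]
          exact Submodule.subset_span rfl
        have := hRker haR
        rw [LinearMap.mem_ker] at this
        rw [dotQ_eq_dotL]
        exact this
      have haF₁ : a ∈ F₁ := ⟨ha.1, hdota⟩
      have haF₂ : a ∈ F₂ := ⟨ha.2, hdota⟩
      refine Or.inr (Or.inr ⟨ha0, ⟨F₁, ⟨c, fun x hx => hc x (hsub₁ hx), rfl, hrk₁⟩, haF₁⟩,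
        ⟨F₂, ⟨c, fun x hx => hc x (hsub₂ hx), rfl, hrk₂⟩, haF₂⟩, ?_⟩)
      apply Set.Subset.antisymm
      · intro x hx
        have hxσ : x ∈ posSpan (σ₁ ∪ σ₂) := by
          rw [hRe] at hx
          exact hx.1
        refine ⟨hxσ, ?_⟩
        have : x ∈ Submodule.span ℚ ({a} : Set (Fin n → ℚ)) := by
          rw [← hspanA]
          exact Submodule.subset_span hx
        obtain ⟨q, hq⟩ := Submodule.mem_span_singleton.mp this
        exact ⟨q, hq.symm⟩
      · intro x hx
        obtain ⟨hxσ, q, hq⟩ := hx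
        subst hq
        rw [hRe]
        exact ⟨hxσ, by rw [dotQ_smul, hdota, mul_zero]⟩

lemma posSpan_union_posSpan (S T : Set (Fin n → ℚ)) :
    posSpan (posSpan S ∪ posSpan T) = posSpan (S ∪ T) := by
  have h1 : Submodule.span Q0 (posSpan S) = Submodule.span Q0 S := by
    rw [posSpan_eq_span, Submodule.span_span]
  have h2 : Submodule.span Q0 (posSpan T) = Submodule.span Q0 T := by
    rw [posSpan_eq_span, Submodule.span_span]
  rw [posSpan_eq_span (posSpan S ∪ posSpan T), Submodule.span_union, h1, h2,
    posSpan_eq_span (S ∪ T), Submodule.span_union]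

lemma posSpan_union_absorb {σ₁ σ₂ : Set (Fin n → ℚ)} (hcl₂ : posSpan σ₂ = σ₂)
    (h : σ₁ ⊆ σ₂) : posSpan (σ₁ ∪ σ₂) = σ₂ := by
  apply Set.Subset.antisymm
  · calc posSpan (σ₁ ∪ σ₂) ⊆ posSpan σ₂ := posSpan_mono (Set.union_subset h subset_rfl)
    _ = σ₂ := hcl₂
  · exact (Set.subset_union_right).trans (subset_posSpan _)

lemma coneDim_union {σ₁ σ₂ : Set (Fin n → ℚ)} {a : Fin n → ℚ}
    (hspan : Submodule.span ℚ σ₁ ⊓ Submodule.span ℚ σ₂ = Submodule.span ℚ {a}) :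
    coneDim (posSpan (σ₁ ∪ σ₂)) + Module.finrank ℚ (Submodule.span ℚ ({a} : Set (Fin n → ℚ)))
      = coneDim σ₁ + coneDim σ₂ := by
  show Module.finrank ℚ (Submodule.span ℚ (posSpan (σ₁ ∪ σ₂))) + _ = _
  rw [span_posSpan, Submodule.span_union, ← hspan]
  exact Submodule.finrank_sup_add_finrank_inf_eq _ _

lemma dim_one_ray {σ : Set (Fin n → ℚ)} (hcl : posSpan σ = σ) (hpt : StronglyConvex σ)
    {w : Fin n → ℚ} (hw : w ∈ σ) (hw0 : w ≠ 0) (hdim : coneDim σ ≤ 1) :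
    ∀ x ∈ σ, ∃ q : ℚ, 0 ≤ q ∧ x = q • w := by
  have hle : Submodule.span ℚ ({w} : Set (Fin n → ℚ)) ≤ Submodule.span ℚ σ :=
    Submodule.span_mono (Set.singleton_subset_iff.mpr hw)
  have heq : Submodule.span ℚ ({w} : Set (Fin n → ℚ)) = Submodule.span ℚ σ := by
    apply Submodule.eq_of_le_of_finrank_eq hle
    have h1 : Module.finrank ℚ (Submodule.span ℚ ({w} : Set (Fin n → ℚ))) = 1 :=
      finrank_span_singleton hw0
    have h2 : 1 ≤ Module.finrank ℚ (Submodule.span ℚ σ) := h1 ▸ finrank_span_le_of_le hle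
    have h3 : Module.finrank ℚ (Submodule.span ℚ σ) ≤ 1 := hdim
    omega
  intro x hx
  have : x ∈ Submodule.span ℚ ({w} : Set (Fin n → ℚ)) := heq ▸ Submodule.subset_span hx
  obtain ⟨q, hq⟩ := Submodule.mem_span_singleton.mp this
  rcases le_or_gt 0 q with hq0 | hq0
  · exact ⟨q, hq0, hq.symm⟩
  · exfalso
    have hnx : -x ∈ σ := by
      have : (-q) • w = -x := by rw [neg_smul, hq]
      rw [← this]
      exact smul_mem_of_poly hcl (by linarith) hw
    have hx0 : x = 0 := hpt x hx hnx
    rw [← hq, smul_eq_zero] at hx0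
    rcases hx0 with h | h
    · exact absurd h (by linarith)
    · exact hw0 h

lemma strongConvex_union {σ₁ σ₂ : Set (Fin n → ℚ)} (hcl₁ : posSpan σ₁ = σ₁)
    (hcl₂ : posSpan σ₂ = σ₂) (hpt₁ : StronglyConvex σ₁) (hpt₂ : StronglyConvex σ₂)
    {a : Fin n → ℚ} (ha : a ∈ σ₁ ∩ σ₂)
    (hspan : Submodule.span ℚ σ₁ ⊓ Submodule.span ℚ σ₂ = Submodule.span ℚ {a}) :
    StronglyConvex (posSpan (σ₁ ∪ σ₂)) := by
  intro x hx hnx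
  obtain ⟨s₁, hs₁, s₂, hs₂, hseq⟩ := mem_posSpan_union.mp hx
  obtain ⟨t₁, ht₁, t₂, ht₂, hteq⟩ := mem_posSpan_union.mp hnx
  rw [hcl₁] at hs₁ ht₁
  rw [hcl₂] at hs₂ ht₂
  have hu : s₁ + t₁ ∈ σ₁ := add_mem_of_poly hcl₁ hs₁ ht₁
  have hv : s₂ + t₂ ∈ σ₂ := add_mem_of_poly hcl₂ hs₂ ht₂
  have huv : (s₁ + t₁) + (s₂ + t₂) = 0 := by
    have : (s₁ + s₂) + (t₁ + t₂) = 0 := by rw [hseq, hteq, add_neg_cancel]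
    calc (s₁ + t₁) + (s₂ + t₂) = (s₁ + s₂) + (t₁ + t₂) := by abel
    _ = 0 := this
  have humem : s₁ + t₁ ∈ Submodule.span ℚ ({a} : Set (Fin n → ℚ)) := by
    rw [← hspan]
    refine ⟨Submodule.subset_span hu, ?_⟩
    rw [eq_neg_of_add_eq_zero_left huv]
    exact Submodule.neg_mem _ (Submodule.subset_span hv)
  obtain ⟨lam, hlam⟩ := Submodule.mem_span_singleton.mp humem
  have hkey : s₁ + t₁ = 0 ∧ s₂ + t₂ = 0 := by
    rcases le_or_gt 0 lam with hl | hl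
    · have h1 : (s₂ + t₂) + lam • a = 0 := by
        rw [hlam, add_comm]
        exact huv
      have hz := pointed_add_eq_zero hcl₂ hpt₂ hv (smul_mem_of_poly hcl₂ hl ha.2) h1
      refine ⟨?_, hz.1⟩
      rw [← hlam]
      exact hz.2
    · have h1 : (s₁ + t₁) + (-lam) • a = 0 := by
        rw [← hlam, neg_smul, add_neg_cancel]
      have hz := pointed_add_eq_zero hcl₁ hpt₁ hu
        (smul_mem_of_poly hcl₁ (by linarith) ha.1) h1
      rw [hz.1, zero_add] at huv
      exact ⟨hz.1, huv⟩
  have hx1 := pointed_add_eq_zero hcl₁ hpt₁ hs₁ ht₁ hkey.1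
  have hx2 := pointed_add_eq_zero hcl₂ hpt₂ hs₂ ht₂ hkey.2
  rw [← hseq, hx1.1, hx2.1, add_zero]

lemma strongConvex_simplex {s : ℕ} (r : Fin s → (Fin n → ℚ)) (h : LinearIndependent ℚ r) :
    StronglyConvex (posSpan (Set.range r)) := by
  intro x hx hnx
  have hBcoe : ((Finset.image r Finset.univ : Finset (Fin n → ℚ)) : Set (Fin n → ℚ))
      = Set.range r := by
    rw [Finset.coe_image, Finset.coe_univ, Set.image_univ]
  rw [← hBcoe, mem_posSpan_iff] at hx hnx
  obtain ⟨f, hf⟩ := mem_span_finset.mp hx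
  obtain ⟨g, hg⟩ := mem_span_finset.mp hnx
  set B := Finset.image r Finset.univ with hB
  have hf' : ∑ b ∈ B, ((f b : ℚ)) • b = x := by rw [← hf]; rfl
  have hg' : ∑ b ∈ B, ((g b : ℚ)) • b = -x := by rw [← hg]; rfl
  have hsum : ∑ b ∈ B, ((f b : ℚ) + (g b : ℚ)) • b = 0 := by
    have := congrArg₂ (· + ·) hf' hg'
    simpa [← Finset.sum_add_distrib, add_smul] using this
  have hsum2 : ∑ i ∈ Finset.univ, ((f (r i) : ℚ) + (g (r i) : ℚ)) • r i = 0 := by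
    rw [← hsum, hB, Finset.sum_image (fun i hi j hj hij => h.injective hij)]
  have hzero : ∀ i, ((f (r i) : ℚ) + (g (r i) : ℚ)) = 0 := by
    have := linearIndependent_iff'.mp h Finset.univ
      (fun i => (f (r i) : ℚ) + (g (r i) : ℚ)) hsum2
    intro i
    exact this i (Finset.mem_univ i)
  have hfz : ∀ i, (f (r i) : ℚ) = 0 := by
    intro i
    have h1 := (f (r i)).2
    have h2 := (g (r i)).2
    have := hzero i
    linarith
  rw [← hf']
  apply Finset.sum_eq_zero
  intro b hb
  obtain ⟨i, _, rfl⟩ := Finset.mem_image.mp hb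
  rw [hfz i, zero_smul]

lemma maxd_le (d : ℕ) (h : 1 ≤ d) : max d (2 * d - 2) ≤ 2 * d - 1 :=
  Nat.max_le.mpr ⟨by omega, by omega⟩

lemma maxd_eq (d : ℕ) (h : 2 ≤ d) : max d (2 * d - 2) = 2 * d - 2 :=
  Nat.max_eq_right (by omega)

/-- In the external case, at least one extreme ray is lost. -/
lemma count_external {σ₁ σ₂ : Set (Fin n → ℚ)} (hcl₁ : posSpan σ₁ = σ₁)
    (hcl₂ : posSpan σ₂ = σ₂) {a : Fin n → ℚ} (ha : a ∈ σ₁ ∩ σ₂)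
    (hspan : Submodule.span ℚ σ₁ ⊓ Submodule.span ℚ σ₂ = Submodule.span ℚ {a})
    (ha0 : a ≠ 0) (hext : OnExtremeRay σ₁ a)
    (hf₁ : {R | IsExtremeRay σ₁ R}.Finite) (hf₂ : {R | IsExtremeRay σ₂ R}.Finite) :
    {R | IsExtremeRay (posSpan (σ₁ ∪ σ₂)) R}.ncard ≤
      {R | IsExtremeRay σ₁ R}.ncard + {R | IsExtremeRay σ₂ R}.ncard - 1 := by
  classical
  set T : Set (Fin n → ℚ) := {x ∈ posSpan (σ₁ ∪ σ₂) | ∃ q : ℚ, x = q • a} with hT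
  set A₁ : Set (Set (Fin n → ℚ)) := {R | IsExtremeRay σ₁ R ∧ a ∉ R} with hA₁
  set A₂ : Set (Set (Fin n → ℚ)) := {R | IsExtremeRay σ₂ R ∧ a ∉ R} with hA₂
  obtain ⟨R₁, hR₁, haR₁⟩ := hext
  have hA₁sub : A₁ ⊆ {R | IsExtremeRay σ₁ R} \ {R₁} := by
    rintro R ⟨hR, haR⟩
    exact ⟨hR, fun hRR₁ => haR (by rw [Set.mem_singleton_iff] at hRR₁; rw [hRR₁]; exact haR₁)⟩
  have hcard₁ : A₁.ncard ≤ {R | IsExtremeRay σ₁ R}.ncard - 1 := by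
    have h1 := Set.ncard_le_ncard hA₁sub hf₁.diff
    have h2 : ({R | IsExtremeRay σ₁ R} \ {R₁}).ncard = {R | IsExtremeRay σ₁ R}.ncard - 1 :=
      Set.ncard_diff_singleton_of_mem hR₁
    omega
  have hr₁pos : 1 ≤ {R | IsExtremeRay σ₁ R}.ncard :=
    (Set.ncard_pos hf₁).mpr ⟨R₁, hR₁⟩
  have hdec : ∀ R ∈ {R | IsExtremeRay (posSpan (σ₁ ∪ σ₂)) R}, R ∈ A₁ ∪ A₂ ∪ {T} := by
    intro R hR
    rcases ray_decomp hcl₁ hcl₂ ha hspan hR with ⟨h1, h2⟩ | ⟨h1, h2⟩ | ⟨_, _, _, h4⟩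
    · exact Or.inl (Or.inl ⟨h1, fun haR => ha0 (h2 haR)⟩)
    · exact Or.inl (Or.inr ⟨h1, fun haR => ha0 (h2 haR)⟩)
    · exact Or.inr (by rw [Set.mem_singleton_iff, h4])
  by_cases hTray : T ∈ {R | IsExtremeRay (posSpan (σ₁ ∪ σ₂)) R}
  · -- then a is on an extreme ray of σ₂ as well
    have haT : a ∈ T := by
      refine ⟨(Set.subset_union_left.trans (subset_posSpan _)) ha.1, 1, (one_smul _ _).symm⟩
    rcases ray_decomp hcl₁ hcl₂ ha hspan hTray with ⟨h1, h2⟩ | ⟨h1, h2⟩ | ⟨_, _, hOn₂, _⟩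
    · exact absurd (h2 haT) ha0
    · exact absurd (h2 haT) ha0
    obtain ⟨R₂, hR₂, haR₂⟩ := hOn₂
    have hA₂sub : A₂ ⊆ {R | IsExtremeRay σ₂ R} \ {R₂} := by
      rintro R ⟨hR, haR⟩
      exact ⟨hR, fun hRR₂ => haR (by rw [Set.mem_singleton_iff] at hRR₂; rw [hRR₂]; exact haR₂)⟩
    have hcard₂ : A₂.ncard ≤ {R | IsExtremeRay σ₂ R}.ncard - 1 := by
      have h1 := Set.ncard_le_ncard hA₂sub hf₂.diff
      have h2 : ({R | IsExtremeRay σ₂ R} \ {R₂}).ncard = {R | IsExtremeRay σ₂ R}.ncard - 1 :=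
        Set.ncard_diff_singleton_of_mem hR₂
      omega
    have hr₂pos : 1 ≤ {R | IsExtremeRay σ₂ R}.ncard :=
      (Set.ncard_pos hf₂).mpr ⟨R₂, hR₂⟩
    have hbig : {R | IsExtremeRay (posSpan (σ₁ ∪ σ₂)) R}.ncard ≤ (A₁ ∪ A₂ ∪ {T}).ncard := by
      refine Set.ncard_le_ncard hdec ?_
      exact (((hf₁.subset (fun R hR => hR.1)).union (hf₂.subset (fun R hR => hR.1))).union
        (Set.finite_singleton T))
    have h3 : (A₁ ∪ A₂ ∪ {T}).ncard ≤ A₁.ncard + A₂.ncard + 1 := by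
      calc (A₁ ∪ A₂ ∪ {T}).ncard ≤ (A₁ ∪ A₂).ncard + ({T} : Set _).ncard :=
            Set.ncard_union_le _ _
      _ ≤ A₁.ncard + A₂.ncard + 1 := by
            have := Set.ncard_union_le A₁ A₂
            rw [Set.ncard_singleton]
            omega
    omega
  · have hdec' : {R | IsExtremeRay (posSpan (σ₁ ∪ σ₂)) R} ⊆ A₁ ∪ A₂ := by
      intro R hR
      rcases hdec R hR with h | h
      · exact h
      · rw [Set.mem_singleton_iff] at h
        exact absurd (h ▸ hR) hTray
    have hbig := Set.ncard_le_ncard hdec'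
      ((hf₁.subset (fun R hR => hR.1)).union (hf₂.subset (fun R hR => hR.1)))
    have h3 := Set.ncard_union_le A₁ A₂
    have hA₂le : A₂.ncard ≤ {R | IsExtremeRay σ₂ R}.ncard :=
      Set.ncard_le_ncard (fun R hR => hR.1) hf₂
    omega

def Motive {n : ℕ} (σ : Set (Fin n → ℚ)) : Prop :=
  IsPolyCone σ ∧ StronglyConvex σ ∧
  {R | IsExtremeRay σ R}.ncard ≤ max (coneDim σ) (2 * coneDim σ - 2) ∧
  (1 < coneDim σ → {R | IsExtremeRay σ R}.ncard = 2 * coneDim σ - 2 → GenBipyramidal σ)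

lemma motive_simplex {s : ℕ} (r : Fin s → (Fin n → ℚ)) (h : LinearIndependent ℚ r) :
    Motive (posSpan (Set.range r)) := by
  have hBcoe : ((Finset.image r Finset.univ : Finset (Fin n → ℚ)) : Set (Fin n → ℚ))
      = Set.range r := by
    rw [Finset.coe_image, Finset.coe_univ, Set.image_univ]
  have hpoly : IsPolyCone (posSpan (Set.range r)) := ⟨Finset.image r Finset.univ, by rw [hBcoe]⟩
  have hdim : coneDim (posSpan (Set.range r)) = s := by
    show Module.finrank ℚ (Submodule.span ℚ (posSpan (Set.range r))) = s
    rw [span_posSpan, finrank_span_eq_card h, Fintype.card_fin]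
  have hcount : {R | IsExtremeRay (posSpan (Set.range r)) R}.ncard ≤ s := by
    have h1 := Set.ncard_le_ncard (raySet_simplex_sub r h)
      ((Set.finite_range r).image _)
    have h2 := Set.ncard_image_le (s := Set.range r)
      (f := fun v => posSpan ({v} : Set (Fin n → ℚ))) (Set.finite_range r)
    have h3 : (Set.range r).ncard ≤ s := by
      rw [← Set.image_univ]
      refine (Set.ncard_image_le Set.finite_univ).trans ?_
      rw [Set.ncard_univ, Nat.card_eq_fintype_card, Fintype.card_fin]
    omega
  refine ⟨hpoly, strongConvex_simplex r h, ?_, ?_⟩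
  · rw [hdim]
    exact hcount.trans (le_max_left _ _)
  · rw [hdim]
    intro hs1 hrs
    have hs2 : s = 2 := by omega
    subst hs2
    have hrange : Set.range r = {r 0, r 1} := by
      apply Set.Subset.antisymm
      · rintro x ⟨i, rfl⟩
        fin_cases i
        · exact Or.inl rfl
        · exact Or.inr rfl
      · rintro x (rfl | rfl)
        · exact ⟨0, rfl⟩
        · exact ⟨1, rfl⟩
    have hli : LinearIndependent ℚ ![r 0, r 1] := by
      have : ![r 0, r 1] = r := by
        funext i
        fin_cases i <;> rfl
      rw [this]
      exact h
    rw [hrange]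
    exact GenBipyramidal.simplex2 (r 0) (r 1) hli

lemma motive_dsum {σ₁ σ₂ : Set (Fin n → ℚ)} (ih₁ : Motive σ₁) (ih₂ : Motive σ₂)
    {a : Fin n → ℚ} (ha : a ∈ σ₁ ∩ σ₂)
    (hspan : Submodule.span ℚ σ₁ ⊓ Submodule.span ℚ σ₂ = Submodule.span ℚ {a}) :
    Motive (posSpan (σ₁ ∪ σ₂)) := by
  obtain ⟨P₁, SC₁, bound₁, eq₁⟩ := ih₁
  obtain ⟨P₂, SC₂, bound₂, eq₂⟩ := ih₂
  have hcl₁ := posSpan_self P₁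
  have hcl₂ := posSpan_self P₂
  have hf₁ := raySet_finite P₁
  have hf₂ := raySet_finite P₂
  have hpoly : IsPolyCone (posSpan (σ₁ ∪ σ₂)) := by
    obtain ⟨B₁, hB₁⟩ := P₁
    obtain ⟨B₂, hB₂⟩ := P₂
    exact ⟨B₁ ∪ B₂, by rw [hB₁, hB₂, posSpan_union_posSpan, Finset.coe_union]⟩
  have hSC : StronglyConvex (posSpan (σ₁ ∪ σ₂)) :=
    strongConvex_union hcl₁ hcl₂ SC₁ SC₂ ha hspan
  by_cases ha0 : a = 0
  · subst ha0
    have hbot : Submodule.span ℚ σ₁ ⊓ Submodule.span ℚ σ₂ = ⊥ := by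
      rw [hspan, Set.singleton_zero, Submodule.span_zero]
    by_cases hd₁0 : coneDim σ₁ = 0
    · have hsub : σ₁ ⊆ σ₂ := by
        intro x hx
        have hxs : x ∈ Submodule.span ℚ σ₁ := Submodule.subset_span hx
        have hb : Submodule.span ℚ σ₁ = ⊥ := Submodule.finrank_eq_zero.mp hd₁0
        rw [hb, Submodule.mem_bot] at hxs
        rw [hxs]
        exact zero_mem_of_poly hcl₂
      rw [posSpan_union_absorb hcl₂ hsub]
      exact ⟨P₂, SC₂, bound₂, eq₂⟩
    by_cases hd₂0 : coneDim σ₂ = 0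
    · have hsub : σ₂ ⊆ σ₁ := by
        intro x hx
        have hxs : x ∈ Submodule.span ℚ σ₂ := Submodule.subset_span hx
        have hb : Submodule.span ℚ σ₂ = ⊥ := Submodule.finrank_eq_zero.mp hd₂0
        rw [hb, Submodule.mem_bot] at hxs
        rw [hxs]
        exact zero_mem_of_poly hcl₁
      rw [Set.union_comm, posSpan_union_absorb hcl₁ hsub]
      exact ⟨P₁, SC₁, bound₁, eq₁⟩
    -- both dimensions ≥ 1, trivial meet
    have hd : coneDim (posSpan (σ₁ ∪ σ₂)) = coneDim σ₁ + coneDim σ₂ := by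
      have h0 := coneDim_union hspan
      rw [Set.singleton_zero, Submodule.span_zero, finrank_bot] at h0
      omega
    have hraysub : {R | IsExtremeRay (posSpan (σ₁ ∪ σ₂)) R} ⊆
        {R | IsExtremeRay σ₁ R} ∪ {R | IsExtremeRay σ₂ R} := by
      intro R hR
      rcases ray_decomp hcl₁ hcl₂ ha hspan hR with ⟨h1, _⟩ | ⟨h1, _⟩ | ⟨hne, _⟩
      exacts [Or.inl h1, Or.inr h1, absurd rfl hne]
    have hcnt : {R | IsExtremeRay (posSpan (σ₁ ∪ σ₂)) R}.ncard ≤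
        {R | IsExtremeRay σ₁ R}.ncard + {R | IsExtremeRay σ₂ R}.ncard :=
      (Set.ncard_le_ncard hraysub (hf₁.union hf₂)).trans (Set.ncard_union_le _ _)
    have hm₁ := maxd_le (coneDim σ₁) (by omega)
    have hm₂ := maxd_le (coneDim σ₂) (by omega)
    refine ⟨hpoly, hSC, ?_, ?_⟩
    · refine le_trans ?_ (le_max_right _ _)
      rw [hd]
      omega
    · intro h1d hre
      by_cases hboth : coneDim σ₁ = 1 ∧ coneDim σ₂ = 1
      · -- two rays spanning a plane: a 2-simplex cone
        have hw : ∀ (τ : Set (Fin n → ℚ)), coneDim τ = 1 → ∃ w ∈ τ, w ≠ (0 : Fin n → ℚ) := by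
          intro τ hτ
          by_contra hno
          push_neg at hno
          have hb : Submodule.span ℚ τ ≤ ⊥ := Submodule.span_le.mpr (by
            intro x hx
            rw [SetLike.mem_coe, Submodule.mem_bot]
            exact hno x hx)
          have hb' : Submodule.span ℚ τ = ⊥ := le_bot_iff.mp hb
          have : coneDim τ = 0 := by
            show Module.finrank ℚ (Submodule.span ℚ τ) = 0
            rw [hb', finrank_bot]
          omega
        obtain ⟨w₁, hw₁, hw₁0⟩ := hw σ₁ hboth.1
        obtain ⟨w₂, hw₂, hw₂0⟩ := hw σ₂ hboth.2
        have hray₁ := dim_one_ray hcl₁ SC₁ hw₁ hw₁0 (le_of_eq hboth.1)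
        have hray₂ := dim_one_ray hcl₂ SC₂ hw₂ hw₂0 (le_of_eq hboth.2)
        have hEq : posSpan (σ₁ ∪ σ₂) = posSpan ({w₁, w₂} : Set (Fin n → ℚ)) := by
          apply Set.Subset.antisymm
          · have hsub : σ₁ ∪ σ₂ ⊆ posSpan ({w₁, w₂} : Set (Fin n → ℚ)) := by
              rintro x (hx | hx)
              · obtain ⟨q, hq0, rfl⟩ := hray₁ x hx
                exact posSpan_smul hq0 (subset_posSpan _ (Or.inl rfl))
              · obtain ⟨q, hq0, rfl⟩ := hray₂ x hx
                exact posSpan_smul hq0 (subset_posSpan _ (Or.inr rfl))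
            calc posSpan (σ₁ ∪ σ₂) ⊆ posSpan (posSpan ({w₁, w₂} : Set (Fin n → ℚ))) :=
                  posSpan_mono hsub
            _ = posSpan ({w₁, w₂} : Set (Fin n → ℚ)) := posSpan_idem _
          · apply posSpan_mono
            intro x hx
            rcases hx with rfl | hx
            · exact Or.inl hw₁
            · rw [Set.mem_singleton_iff] at hx
              subst hx
              exact Or.inr hw₂
        have hli : LinearIndependent ℚ ![w₁, w₂] := by
          rw [LinearIndependent.pair_iff]
          intro p q hpq
          have h1 : p • w₁ ∈ Submodule.span ℚ σ₁ :=
            Submodule.smul_mem _ _ (Submodule.subset_span hw₁)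
          have h2 : p • w₁ ∈ Submodule.span ℚ σ₂ := by
            rw [eq_neg_of_add_eq_zero_left hpq]
            exact Submodule.neg_mem _ (Submodule.smul_mem _ _ (Submodule.subset_span hw₂))
          have hmem : p • w₁ ∈ (⊥ : Submodule ℚ (Fin n → ℚ)) :=
            hbot ▸ (Submodule.mem_inf.mpr ⟨h1, h2⟩)
          rw [Submodule.mem_bot] at hmem
          have hp0 : p = 0 := by
            rcases smul_eq_zero.mp hmem with h | h
            · exact h
            · exact absurd h hw₁0
          refine ⟨hp0, ?_⟩
          rw [hp0, zero_smul, zero_add] at hpq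
          rcases smul_eq_zero.mp hpq with h | h
          · exact h
          · exact absurd h hw₂0
        rw [hEq]
        exact GenBipyramidal.simplex2 w₁ w₂ hli
      · exfalso
        have hcase : 2 ≤ coneDim σ₁ ∨ 2 ≤ coneDim σ₂ := by
          rcases Nat.lt_or_ge (coneDim σ₁) 2 with h | h
          · right
            rcases Nat.lt_or_ge (coneDim σ₂) 2 with h' | h'
            · exact absurd ⟨by omega, by omega⟩ hboth
            · exact h'
          · left; exact h
        rw [hd] at hre
        rcases hcase with h | h
        · have he := maxd_eq (coneDim σ₁) h
          omega
        · have he := maxd_eq (coneDim σ₂) h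
          omega
  · -- a ≠ 0
    have hd : coneDim (posSpan (σ₁ ∪ σ₂)) + 1 = coneDim σ₁ + coneDim σ₂ := by
      have h0 := coneDim_union hspan
      rw [finrank_span_singleton ha0] at h0
      omega
    by_cases hd₁ : coneDim σ₁ ≤ 1
    · have hray := dim_one_ray hcl₁ SC₁ ha.1 ha0 hd₁
      have hsub : σ₁ ⊆ σ₂ := by
        intro x hx
        obtain ⟨q, hq0, rfl⟩ := hray x hx
        exact smul_mem_of_poly hcl₂ hq0 ha.2
      rw [posSpan_union_absorb hcl₂ hsub]
      exact ⟨P₂, SC₂, bound₂, eq₂⟩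
    by_cases hd₂ : coneDim σ₂ ≤ 1
    · have hray := dim_one_ray hcl₂ SC₂ ha.2 ha0 hd₂
      have hsub : σ₂ ⊆ σ₁ := by
        intro x hx
        obtain ⟨q, hq0, rfl⟩ := hray x hx
        exact smul_mem_of_poly hcl₁ hq0 ha.1
      rw [Set.union_comm, posSpan_union_absorb hcl₁ hsub]
      exact ⟨P₁, SC₁, bound₁, eq₁⟩
    push_neg at hd₁ hd₂
    have hme₁ := maxd_eq (coneDim σ₁) hd₁
    have hme₂ := maxd_eq (coneDim σ₂) hd₂
    by_cases hOn : OnExtremeRay σ₁ a ∨ OnExtremeRay σ₂ a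
    · have hcnt : {R | IsExtremeRay (posSpan (σ₁ ∪ σ₂)) R}.ncard ≤
          {R | IsExtremeRay σ₁ R}.ncard + {R | IsExtremeRay σ₂ R}.ncard - 1 := by
        rcases hOn with h | h
        · exact count_external hcl₁ hcl₂ ha hspan ha0 h hf₁ hf₂
        · have hc := count_external hcl₂ hcl₁ ⟨ha.2, ha.1⟩ (by rw [inf_comm]; exact hspan)
            ha0 h hf₂ hf₁
          rw [Set.union_comm σ₂ σ₁] at hc
          omega
      refine ⟨hpoly, hSC, ?_, ?_⟩
      · refine le_trans ?_ (le_max_right _ _)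
        omega
      · intro h1d hre
        exfalso
        omega
    · push_neg at hOn
      have hraysub : {R | IsExtremeRay (posSpan (σ₁ ∪ σ₂)) R} ⊆
          {R | IsExtremeRay σ₁ R} ∪ {R | IsExtremeRay σ₂ R} := by
        intro R hR
        rcases ray_decomp hcl₁ hcl₂ ha hspan hR with ⟨h1, _⟩ | ⟨h1, _⟩ | ⟨_, hOn₁, _, _⟩
        exacts [Or.inl h1, Or.inr h1, absurd hOn₁ hOn.1]
      have hcnt : {R | IsExtremeRay (posSpan (σ₁ ∪ σ₂)) R}.ncard ≤
          {R | IsExtremeRay σ₁ R}.ncard + {R | IsExtremeRay σ₂ R}.ncard :=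
        (Set.ncard_le_ncard hraysub (hf₁.union hf₂)).trans (Set.ncard_union_le _ _)
      refine ⟨hpoly, hSC, ?_, ?_⟩
      · refine le_trans ?_ (le_max_right _ _)
        omega
      · intro h1d hre
        have he₁ : {R | IsExtremeRay σ₁ R}.ncard = 2 * coneDim σ₁ - 2 := by omega
        have he₂ : {R | IsExtremeRay σ₂ R}.ncard = 2 * coneDim σ₂ - 2 := by omega
        exact GenBipyramidal.internal σ₁ σ₂ a (eq₁ (by omega) he₁) (eq₂ (by omega) he₂)
          ⟨ha, hspan, rfl⟩ hOn.1 hOn.2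

theorem motive_of_ciCone {σ : Set (Fin n → ℚ)} (hσ : CICone σ) : Motive σ := by
  induction hσ with
  | simplex s r h => exact motive_simplex r h
  | dsum σ₁ σ₂ h₁ h₂ hds ih₁ ih₂ =>
    obtain ⟨a, ha, hspan, _⟩ := hds
    exact motive_dsum ih₁ ih₂ ha hspan

/-- A complete intersection cone of dimension `m > 1` with exactly `2m - 2`
extreme rays is a general bipyramidal cone. -/
theorem ciCone_max_rays_bipyramidal {n : ℕ} (σ : Set (Fin n → ℚ)) (hσ : CICone σ)
    (m : ℕ) (hm : 1 < m) (hdim : coneDim σ = m)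
    (hrays : {R | IsExtremeRay σ R}.ncard = 2 * m - 2) :
    GenBipyramidal σ := by
  have hmot := motive_of_ciCone hσ
  subst hdim
  exact hmot.2.2.2 hm hrays
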